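/- Let Δ > 0, let f, g : ℝ → ℝ be measurable, and let α, β, γ ∈ [1, ∞] satisfy 1/α + 1/β − 1 = 1/γ. Suppose that the function t ↦ ‖(f(t + sΔ))_{s∈ℤ}‖_{ℓ^α} belongs to L^{2α}([0,Δ]) and the function t ↦ ‖(g(t + sΔ))_{s∈ℤ}‖_{ℓ^β} belongs to L^{2β}([0,Δ]). Then the sequence s ↦ ∫_ℝ |f(t) g(t + sΔ)| dt belongs to ℓ^γ(ℤ). -/

import Mathlib

open MeasureTheory Set ENNReal

/-- ℓ^p norm (p ∈ [1,∞], ENNReal) of a ℤ-indexed family of extended nonnegative reals. -/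
noncomputable def lnormZ (p : ℝ≥0∞) (a : ℤ → ℝ≥0∞) : ℝ≥0∞ :=
  if p = ∞ then ⨆ s, a s else (∑' s, a s ^ p.toReal) ^ (1 / p.toReal)

/-- Membership of an ℝ≥0∞-valued function in L^p([0,Δ]) (p ∈ [1,∞], ENNReal). -/
noncomputable def MemLpGrid (p : ℝ≥0∞) (Δ : ℝ) (F : ℝ → ℝ≥0∞) : Prop :=
  if p = ∞ then essSup F (volume.restrict (Ioc 0 Δ)) < ∞
  else ∫⁻ t in Ioc (0 : ℝ) Δ, F t ^ p.toReal < ∞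

lemma lint_shift (h : ℝ → ℝ≥0∞) (c Δ : ℝ) :
    ∫⁻ t in Ioc c (c + Δ), h t = ∫⁻ t in Ioc (0:ℝ) Δ, h (t + c) := by
  rw [← lintegral_indicator measurableSet_Ioc, ← lintegral_indicator measurableSet_Ioc]
  rw [← lintegral_add_right_eq_self (fun t => (Ioc c (c + Δ)).indicator h t) c]
  congr 1; ext t
  by_cases ht : t ∈ Ioc (0:ℝ) Δ
  · have : t + c ∈ Ioc c (c + Δ) := by
      simp only [mem_Ioc] at ht ⊢; constructor <;> linarith [ht.1, ht.2]
    rw [indicator_of_mem this, indicator_of_mem ht]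
  · have : t + c ∉ Ioc c (c + Δ) := by
      simp only [mem_Ioc] at ht ⊢; intro h1; by_contra h2; push_neg at h2
      exact ht ⟨by linarith [h1.1], by linarith [h1.2]⟩
    rw [indicator_of_notMem this, indicator_of_notMem ht]

lemma periodize {Δ : ℝ} (hΔ : 0 < Δ) (h : ℝ → ℝ≥0∞) :
    ∫⁻ t, h t = ∑' r : ℤ, ∫⁻ t in Ioc (0:ℝ) Δ, h (t + r * Δ) := by
  have hU : ⋃ r : ℤ, Ioc ((r:ℝ) * Δ) ((r:ℝ) * Δ + Δ) = univ := by
    have h0 := iUnion_Ioc_zsmul hΔ (α := ℝ)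
    simp only [zsmul_eq_mul, Int.cast_add, Int.cast_one, add_mul, one_mul] at h0
    exact h0
  have hdisj : Pairwise (Function.onFun Disjoint
      fun r : ℤ => Ioc ((r:ℝ) * Δ) ((r:ℝ) * Δ + Δ)) := by
    intro r s hrs
    simp only [Function.onFun, Set.Ioc_disjoint_Ioc]
    rcases hrs.lt_or_gt with hlt | hlt
    · have : (r:ℝ) + 1 ≤ s := by exact_mod_cast hlt
      refine le_trans (min_le_left _ _) (le_trans ?_ (le_max_right _ _))
      nlinarith
    · have : (s:ℝ) + 1 ≤ r := by exact_mod_cast hlt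
      refine le_trans (min_le_right _ _) (le_trans ?_ (le_max_left _ _))
      nlinarith
  calc ∫⁻ t, h t = ∫⁻ t in ⋃ r : ℤ, Ioc ((r:ℝ) * Δ) ((r:ℝ) * Δ + Δ), h t := by
        rw [hU, Measure.restrict_univ]
    _ = ∑' r : ℤ, ∫⁻ t in Ioc ((r:ℝ) * Δ) ((r:ℝ) * Δ + Δ), h t :=
        lintegral_iUnion (fun _ => measurableSet_Ioc) hdisj h
    _ = ∑' r : ℤ, ∫⁻ t in Ioc (0:ℝ) Δ, h (t + r * Δ) :=
        tsum_congr fun r => lint_shift h _ Δ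

instance : SigmaFinite (Measure.count : Measure ℤ) :=
  Measure.sigmaFinite_of_countable (countable_range fun z : ℤ => ({z} : Set ℤ))
    (by rintro s ⟨z, rfl⟩; simp [Measure.count_singleton])
    (by apply eq_univ_of_forall; intro z; exact ⟨{z}, ⟨z, rfl⟩, rfl⟩)

lemma prodcount {X : ℝ × ℤ → ℝ≥0∞} (hX : Measurable X) (μ : Measure ℝ) [SigmaFinite μ] :
    ∫⁻ ω, X ω ∂(μ.prod Measure.count) = ∫⁻ t, ∑' r : ℤ, X (t, r) ∂μ := by
  rw [lintegral_prod _ hX.aemeasurable]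
  simp only [lintegral_count]

lemma sq_int_bound {X : Type*} [MeasurableSpace X] (μ : Measure X) (F G : X → ℝ≥0∞)
    (hF : AEMeasurable F μ) (hG : AEMeasurable G μ) :
    ∫⁻ t, F t * G t ∂μ ≤ (∫⁻ t, F t ^ (2:ℝ) ∂μ) ^ (1/2:ℝ) * (∫⁻ t, G t ^ (2:ℝ) ∂μ) ^ (1/2:ℝ) :=
  ENNReal.lintegral_mul_le_Lp_mul_Lq μ ⟨by norm_num, by norm_num, by norm_num⟩ hF hG

lemma lint_lt_top_of_sq {X : Type*} [MeasurableSpace X] {μ : Measure X} {F : X → ℝ≥0∞}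
    (hμ : μ univ < ∞) (hF : AEMeasurable F μ) (h2 : ∫⁻ t, F t ^ (2:ℝ) ∂μ < ∞) :
    ∫⁻ t, F t ∂μ < ∞ := by
  have h := sq_int_bound μ F (fun _ => 1) hF aemeasurable_const
  simp only [mul_one, ENNReal.one_rpow, lintegral_one] at h
  exact lt_of_le_of_lt h (ENNReal.mul_lt_top
    (ENNReal.rpow_lt_top_of_nonneg (by norm_num) h2.ne)
    (ENNReal.rpow_lt_top_of_nonneg (by norm_num) hμ.ne))

/-- Discrete–continuous Young convolution inequality (Lemma on ℓ^γ membership). -/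
theorem stmt0 (Δ : ℝ) (hΔ : 0 < Δ) (f g : ℝ → ℝ) (hf : Measurable f) (hg : Measurable g)
    (α β γ : ℝ≥0∞) (hα : 1 ≤ α) (hβ : 1 ≤ β) (hγ : 1 ≤ γ)
    (hexp : 1 / α + 1 / β = 1 + 1 / γ)
    (hF : MemLpGrid (2 * α) Δ
      (fun t => lnormZ α (fun s : ℤ => ENNReal.ofReal |f (t + (s : ℝ) * Δ)|)))
    (hG : MemLpGrid (2 * β) Δ
      (fun t => lnormZ β (fun s : ℤ => ENNReal.ofReal |g (t + (s : ℝ) * Δ)|))) :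
    lnormZ γ (fun s : ℤ => ∫⁻ t : ℝ, ENNReal.ofReal |f t * g (t + (s : ℝ) * Δ)|) < ∞ := by
  classical
  set I : Set ℝ := Ioc (0:ℝ) Δ with hI
  set μ : Measure ℝ := volume.restrict I with hμdef
  set Ω : Measure (ℝ × ℤ) := μ.prod Measure.count with hΩdef
  set a : ℝ → ℤ → ℝ≥0∞ := fun t r => ENNReal.ofReal |f (t + r * Δ)| with ha
  set b : ℝ → ℤ → ℝ≥0∞ := fun t r => ENNReal.ofReal |g (t + r * Δ)| with hb
  set A : ℝ × ℤ → ℝ≥0∞ := fun ω => a ω.1 ω.2 with hA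
  set B : ℤ → ℝ × ℤ → ℝ≥0∞ := fun s ω => b ω.1 (ω.2 + s) with hB
  set c : ℤ → ℝ≥0∞ := fun s => ∫⁻ t : ℝ, ENNReal.ofReal |f t * g (t + s * Δ)| with hc
  have hμuniv : μ univ < ∞ := by
    rw [hμdef, Measure.restrict_apply_univ, hI, Real.volume_Ioc]
    exact ENNReal.ofReal_lt_top
  have hma : ∀ r : ℤ, Measurable fun t => a t r := fun r =>
    ((hf.comp (measurable_add_const _)).abs).ennreal_ofReal
  have hmb : ∀ r : ℤ, Measurable fun t => b t r := fun r =>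
    ((hg.comp (measurable_add_const _)).abs).ennreal_ofReal
  have hmA : Measurable A := measurable_from_prod_countable_left fun r => hma r
  have hmB : ∀ s, Measurable (B s) := fun s =>
    measurable_from_prod_countable_left fun r => hmb (r + s)
  -- representation of c s as iterated integral
  have key' : ∀ s : ℤ, c s = ∫⁻ t, (∑' r : ℤ, a t r * b t (r + s)) ∂μ := by
    intro s
    calc c s = ∑' r : ℤ, ∫⁻ t in Ioc (0:ℝ) Δ,
          ENNReal.ofReal |f (t + (r:ℝ) * Δ) * g (t + (r:ℝ) * Δ + (s:ℝ) * Δ)| :=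
        periodize hΔ _
      _ = ∑' r : ℤ, ∫⁻ t, a t r * b t (r + s) ∂μ := by
          refine tsum_congr fun r => lintegral_congr fun t => ?_
          rw [abs_mul, ENNReal.ofReal_mul (abs_nonneg _)]
          congr 2
          push_cast; ring
      _ = ∫⁻ t, (∑' r : ℤ, a t r * b t (r + s)) ∂μ :=
          (lintegral_tsum fun r => ((hma r).mul (hmb (r + s))).aemeasurable).symm
  have key : ∀ s : ℤ, c s = ∫⁻ ω, A ω * B s ω ∂Ω := by
    intro s
    rw [key' s, hΩdef, prodcount (X := fun ω => A ω * B s ω) (hmA.mul (hmB s)) μ]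
  have hα0 : α ≠ 0 := by intro h0; rw [h0] at hα; simp at hα
  have hβ0 : β ≠ 0 := by intro h0; rw [h0] at hβ; simp at hβ
  have hγ0 : γ ≠ 0 := by intro h0; rw [h0] at hγ; simp at hγ
  -- hypotheses on squared integrability, in the finite-exponent case
  have hFsq : α ≠ ∞ → (∫⁻ t, (∑' r : ℤ, a t r ^ α.toReal) ^ (2:ℝ) ∂μ) < ∞ := by
    intro hα'
    have hp0 : (0:ℝ) < α.toReal := ENNReal.toReal_pos hα0 hα'
    have h2α : (2:ℝ≥0∞) * α ≠ ∞ := ENNReal.mul_ne_top (by norm_num) hα'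
    rw [MemLpGrid, if_neg h2α] at hF
    have hto : ((2:ℝ≥0∞) * α).toReal = 2 * α.toReal := by
      rw [ENNReal.toReal_mul]; norm_num
    rw [hto] at hF
    refine lt_of_eq_of_lt (Eq.symm ?_) hF
    refine lintegral_congr fun t => ?_
    rw [lnormZ, if_neg hα', ← ENNReal.rpow_mul]
    congr 1
    field_simp
  have hGsq : β ≠ ∞ → (∫⁻ t, (∑' r : ℤ, b t r ^ β.toReal) ^ (2:ℝ) ∂μ) < ∞ := by
    intro hβ'
    have hp0 : (0:ℝ) < β.toReal := ENNReal.toReal_pos hβ0 hβ'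
    have h2β : (2:ℝ≥0∞) * β ≠ ∞ := ENNReal.mul_ne_top (by norm_num) hβ'
    rw [MemLpGrid, if_neg h2β] at hG
    have hto : ((2:ℝ≥0∞) * β).toReal = 2 * β.toReal := by
      rw [ENNReal.toReal_mul]; norm_num
    rw [hto] at hG
    refine lt_of_eq_of_lt (Eq.symm ?_) hG
    refine lintegral_congr fun t => ?_
    rw [lnormZ, if_neg hβ', ← ENNReal.rpow_mul]
    congr 1
    field_simp
  have hmFp : ∀ (u : ℝ), Measurable fun t => ∑' r : ℤ, a t r ^ u := fun u =>
    Measurable.ennreal_tsum fun r => (hma r).pow_const u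
  have hmGq : ∀ (u : ℝ), Measurable fun t => ∑' r : ℤ, b t r ^ u := fun u =>
    Measurable.ennreal_tsum fun r => (hmb r).pow_const u
  have hFint : α ≠ ∞ → (∫⁻ t, (∑' r : ℤ, a t r ^ α.toReal) ∂μ) < ∞ := fun hα' =>
    lint_lt_top_of_sq hμuniv (hmFp _).aemeasurable (hFsq hα')
  have hGint : β ≠ ∞ → (∫⁻ t, (∑' r : ℤ, b t r ^ β.toReal) ∂μ) < ∞ := fun hβ' =>
    lint_lt_top_of_sq hμuniv (hmGq _).aemeasurable (hGsq hβ')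
  have hmG1 : Measurable fun t => ∑' r : ℤ, b t r := Measurable.ennreal_tsum fun r => hmb r
  have hmF1 : Measurable fun t => ∑' r : ℤ, a t r := Measurable.ennreal_tsum fun r => hma r
  by_cases hγ' : γ = ∞
  · rw [lnormZ, if_pos hγ']
    by_cases hα' : α = ∞
    · -- Case C : α = ∞, β = 1
      have hβ1 : β = 1 := by
        rw [hα', hγ'] at hexp
        simp only [ENNReal.div_top, zero_add, add_zero] at hexp
        rwa [one_div, ENNReal.inv_eq_one] at hexp
      have h2α : (2:ℝ≥0∞) * α = ∞ := by
        rw [hα']; exact ENNReal.mul_top (by norm_num)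
      rw [MemLpGrid, if_pos h2α] at hF
      have heq : (fun t => lnormZ α (fun s : ℤ => ENNReal.ofReal |f (t + (s:ℝ) * Δ)|))
          = fun t => ⨆ r : ℤ, a t r := by
        funext t
        rw [lnormZ, if_pos hα']
      rw [heq] at hF
      have hM : essSup (fun t => ⨆ r : ℤ, a t r) μ < ∞ := hF
      have hG1 : (∫⁻ t, (∑' r : ℤ, b t r) ∂μ) < ∞ := by
        have h1 := hGint (by rw [hβ1]; exact one_ne_top)
        have hto : β.toReal = 1 := by rw [hβ1]; exact ENNReal.toReal_one
        rw [hto] at h1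
        simpa [ENNReal.rpow_one] using h1
      have hbd : ∀ s : ℤ, c s ≤ essSup (fun t => ⨆ r : ℤ, a t r) μ *
          ∫⁻ t, (∑' r : ℤ, b t r) ∂μ := by
        intro s
        rw [key' s]
        calc ∫⁻ t, (∑' r : ℤ, a t r * b t (r + s)) ∂μ
            ≤ ∫⁻ t, (⨆ r : ℤ, a t r) * ∑' r : ℤ, b t (r + s) ∂μ := by
              refine lintegral_mono fun t => ?_
              rw [← ENNReal.tsum_mul_left]
              exact ENNReal.tsum_le_tsum fun r => mul_le_mul_left (le_iSup (a t) r) _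
          _ = ∫⁻ t, (⨆ r : ℤ, a t r) * ∑' r : ℤ, b t r ∂μ := by
              refine lintegral_congr fun t => ?_
              congr 1
              exact (Equiv.addRight s).tsum_eq (fun r => b t r)
          _ ≤ ∫⁻ t, essSup (fun t => ⨆ r : ℤ, a t r) μ * ∑' r : ℤ, b t r ∂μ := by
              refine lintegral_mono_ae ?_
              filter_upwards [_root_.ae_le_essSup (μ := μ) (f := fun t => ⨆ r : ℤ, a t r)] with t ht
              exact mul_le_mul_left ht _
          _ = essSup (fun t => ⨆ r : ℤ, a t r) μ * ∫⁻ t, (∑' r : ℤ, b t r) ∂μ :=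
              lintegral_const_mul _ hmG1
      exact lt_of_le_of_lt (iSup_le hbd) (ENNReal.mul_lt_top hM hG1)
    · by_cases hβ' : β = ∞
      · -- Case D : β = ∞, α = 1
        have hα1 : α = 1 := by
          rw [hβ', hγ'] at hexp
          simp only [ENNReal.div_top, add_zero] at hexp
          rwa [one_div, ENNReal.inv_eq_one] at hexp
        have h2β : (2:ℝ≥0∞) * β = ∞ := by
          rw [hβ']; exact ENNReal.mul_top (by norm_num)
        rw [MemLpGrid, if_pos h2β] at hG
        have heq : (fun t => lnormZ β (fun s : ℤ => ENNReal.ofReal |g (t + (s:ℝ) * Δ)|))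
            = fun t => ⨆ r : ℤ, b t r := by
          funext t
          rw [lnormZ, if_pos hβ']
        rw [heq] at hG
        have hM : essSup (fun t => ⨆ r : ℤ, b t r) μ < ∞ := hG
        have hF1 : (∫⁻ t, (∑' r : ℤ, a t r) ∂μ) < ∞ := by
          have h1 := hFint (by rw [hα1]; exact one_ne_top)
          have hto : α.toReal = 1 := by rw [hα1]; exact ENNReal.toReal_one
          rw [hto] at h1
          simpa [ENNReal.rpow_one] using h1
        have hbd : ∀ s : ℤ, c s ≤ (∫⁻ t, (∑' r : ℤ, a t r) ∂μ) *
            essSup (fun t => ⨆ r : ℤ, b t r) μ := by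
          intro s
          rw [key' s]
          calc ∫⁻ t, (∑' r : ℤ, a t r * b t (r + s)) ∂μ
              ≤ ∫⁻ t, (∑' r : ℤ, a t r) * ⨆ r : ℤ, b t r ∂μ := by
                refine lintegral_mono fun t => ?_
                rw [← ENNReal.tsum_mul_right]
                exact ENNReal.tsum_le_tsum fun r => mul_le_mul_right (le_iSup (b t) (r + s)) _
            _ ≤ ∫⁻ t, (∑' r : ℤ, a t r) * essSup (fun t => ⨆ r : ℤ, b t r) μ ∂μ := by
                refine lintegral_mono_ae ?_
                filter_upwards [_root_.ae_le_essSup (μ := μ) (f := fun t => ⨆ r : ℤ, b t r)] with t ht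
                exact mul_le_mul_right ht _
            _ = (∫⁻ t, (∑' r : ℤ, a t r) ∂μ) * essSup (fun t => ⨆ r : ℤ, b t r) μ :=
                lintegral_mul_const _ hmF1
        exact lt_of_le_of_lt (iSup_le hbd) (ENNReal.mul_lt_top hF1 hM)
      · -- Case B : α, β finite conjugate
        set p : ℝ := α.toReal with hpdef
        set q : ℝ := β.toReal with hqdef
        have hp0 : (0:ℝ) < p := ENNReal.toReal_pos hα0 hα'
        have hq0 : (0:ℝ) < q := ENNReal.toReal_pos hβ0 hβ'
        have hp1 : 1 ≤ p := by
          rw [← ENNReal.toReal_one]; exact ENNReal.toReal_mono hα' hα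
        have hrel : 1/p + 1/q = 1 := by
          rw [hγ'] at hexp
          simp only [ENNReal.div_top, add_zero] at hexp
          have h := congrArg ENNReal.toReal hexp
          rw [ENNReal.toReal_add (by rw [one_div]; exact ENNReal.inv_ne_top.mpr hα0)
            (by rw [one_div]; exact ENNReal.inv_ne_top.mpr hβ0)] at h
          simpa [ENNReal.toReal_div] using h
        have hplt : 1 < p := by
          rcases lt_or_eq_of_le hp1 with h | h
          · exact h
          · exfalso
            have h1 : 1/q > 0 := by positivity
            rw [← h] at hrel
            simp only [div_one] at hrel
            linarith [hrel]
        have hpq : Real.HolderConjugate p q := Real.holderConjugate_iff.mpr ⟨hplt, by rw [← one_div, ← one_div]; exact hrel⟩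
        have hK1 : (∫⁻ ω, A ω ^ p ∂Ω) = ∫⁻ t, (∑' r : ℤ, a t r ^ p) ∂μ := by
          rw [hΩdef, prodcount (hmA.pow_const p) μ]
        have hK2 : ∀ s : ℤ, (∫⁻ ω, B s ω ^ q ∂Ω) = ∫⁻ t, (∑' r : ℤ, b t r ^ q) ∂μ := by
          intro s
          rw [hΩdef, prodcount ((hmB s).pow_const q) μ]
          refine lintegral_congr fun t => ?_
          exact (Equiv.addRight s).tsum_eq (fun r => b t r ^ q)
        have hbd : ∀ s : ℤ, c s ≤ (∫⁻ t, (∑' r : ℤ, a t r ^ p) ∂μ)^(1/p) *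
            (∫⁻ t, (∑' r : ℤ, b t r ^ q) ∂μ)^(1/q) := by
          intro s
          rw [key s, ← hK1, ← hK2 s]
          exact ENNReal.lintegral_mul_le_Lp_mul_Lq Ω hpq hmA.aemeasurable (hmB s).aemeasurable
        refine lt_of_le_of_lt (iSup_le hbd) (ENNReal.mul_lt_top ?_ ?_)
        · exact ENNReal.rpow_lt_top_of_nonneg (by positivity) (hFint hα').ne
        · exact ENNReal.rpow_lt_top_of_nonneg (by positivity) (hGint hβ').ne
  · -- Case A : γ < ∞, hence α, β < ∞
    have hα' : α ≠ ∞ := by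
      intro hα''
      rw [hα''] at hexp
      simp only [ENNReal.div_top, zero_add] at hexp
      have h1 : 1 / β ≤ 1 := by
        rw [one_div]
        calc β⁻¹ ≤ 1⁻¹ := ENNReal.inv_le_inv.mpr hβ
          _ = 1 := inv_one
      rw [hexp] at h1
      have h2 : 1 / γ = 0 := by
        have h3 : (1:ℝ≥0∞) + 1/γ ≤ 1 + 0 := by simpa using h1
        have := (ENNReal.add_le_add_iff_left (one_ne_top)).mp h3
        exact le_antisymm this zero_le
      rw [one_div, ENNReal.inv_eq_zero] at h2
      exact hγ' h2
    have hβ' : β ≠ ∞ := by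
      intro hβ''
      rw [hβ''] at hexp
      simp only [ENNReal.div_top, add_zero] at hexp
      have h1 : 1 / α ≤ 1 := by
        rw [one_div]
        calc α⁻¹ ≤ 1⁻¹ := ENNReal.inv_le_inv.mpr hα
          _ = 1 := inv_one
      rw [hexp] at h1
      have h2 : 1 / γ = 0 := by
        have h3 : (1:ℝ≥0∞) + 1/γ ≤ 1 + 0 := by simpa using h1
        have := (ENNReal.add_le_add_iff_left (one_ne_top)).mp h3
        exact le_antisymm this zero_le
      rw [one_div, ENNReal.inv_eq_zero] at h2
      exact hγ' h2
    set p : ℝ := α.toReal with hpdef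
    set q : ℝ := β.toReal with hqdef
    set rr : ℝ := γ.toReal with hrrdef
    have hp0 : (0:ℝ) < p := ENNReal.toReal_pos hα0 hα'
    have hq0 : (0:ℝ) < q := ENNReal.toReal_pos hβ0 hβ'
    have hrr0 : (0:ℝ) < rr := ENNReal.toReal_pos hγ0 hγ'
    have hp1 : 1 ≤ p := by
      rw [← ENNReal.toReal_one]; exact ENNReal.toReal_mono hα' hα
    have hq1 : 1 ≤ q := by
      rw [← ENNReal.toReal_one]; exact ENNReal.toReal_mono hβ' hβ
    have hrel : 1/p + 1/q = 1 + 1/rr := by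
      have h := congrArg ENNReal.toReal hexp
      rw [ENNReal.toReal_add (by rw [one_div]; exact ENNReal.inv_ne_top.mpr hα0)
          (by rw [one_div]; exact ENNReal.inv_ne_top.mpr hβ0),
        ENNReal.toReal_add one_ne_top (by rw [one_div]; exact ENNReal.inv_ne_top.mpr hγ0)] at h
      simpa [ENNReal.toReal_div] using h
    have he1 : (0:ℝ) ≤ 1/rr := by positivity
    have he2 : (0:ℝ) ≤ 1/p - 1/rr := by
      have : 1/q ≤ 1 := (div_le_one hq0).mpr hq1
      linarith
    have he3 : (0:ℝ) ≤ 1/q - 1/rr := by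
      have : 1/p ≤ 1 := (div_le_one hp0).mpr hp1
      linarith
    set T : ℤ → ℝ≥0∞ := fun s => ∫⁻ ω, A ω ^ p * B s ω ^ q ∂Ω with hT
    -- pointwise splitting identity
    have hpt : ∀ (x y : ℝ≥0∞),
        x * y = (x^p * y^q)^(1/rr) * (x^p)^(1/p - 1/rr) * (y^q)^(1/q - 1/rr) := by
      intro x y
      have hx : x ^ (p * (1/rr)) * x ^ (p * (1/p - 1/rr)) = x := by
        rw [← ENNReal.rpow_add_of_nonneg _ _ (by positivity) (mul_nonneg hp0.le he2),
          show p * (1/rr) + p * (1/p - 1/rr) = 1 by field_simp; ring, ENNReal.rpow_one]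
      have hy : y ^ (q * (1/rr)) * y ^ (q * (1/q - 1/rr)) = y := by
        rw [← ENNReal.rpow_add_of_nonneg _ _ (by positivity) (mul_nonneg hq0.le he3),
          show q * (1/rr) + q * (1/q - 1/rr) = 1 by field_simp; ring, ENNReal.rpow_one]
      calc x * y = (x^(p*(1/rr)) * x^(p*(1/p-1/rr))) * (y^(q*(1/rr)) * y^(q*(1/q-1/rr))) := by
            rw [hx, hy]
        _ = (x^(p*(1/rr)) * y^(q*(1/rr))) * x^(p*(1/p-1/rr)) * y^(q*(1/q-1/rr)) := by ring
        _ = (x^p * y^q)^(1/rr) * (x^p)^(1/p - 1/rr) * (y^q)^(1/q - 1/rr) := by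
            rw [ENNReal.mul_rpow_of_nonneg _ _ he1, ← ENNReal.rpow_mul, ← ENNReal.rpow_mul,
              ← ENNReal.rpow_mul, ← ENNReal.rpow_mul]
    have holder : ∀ s : ℤ, c s ≤
        (T s)^(1/rr) * (∫⁻ ω, A ω ^ p ∂Ω)^(1/p - 1/rr) * (∫⁻ ω, B s ω ^ q ∂Ω)^(1/q - 1/rr) := by
      intro s
      rw [key s]
      have H := ENNReal.lintegral_prod_norm_pow_le (μ := Ω) Finset.univ
        (f := ![fun ω => A ω^p * B s ω^q, fun ω => A ω^p, fun ω => B s ω^q])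
        (p := ![1/rr, 1/p - 1/rr, 1/q - 1/rr])
        (by
          intro i _
          fin_cases i
          · exact ((hmA.pow_const p).mul ((hmB s).pow_const q)).aemeasurable
          · exact (hmA.pow_const p).aemeasurable
          · exact ((hmB s).pow_const q).aemeasurable)
        (by
          simp only [Fin.sum_univ_three, Matrix.cons_val_zero, Matrix.cons_val_one,
            Matrix.head_cons, Matrix.cons_val_two, Matrix.tail_cons]
          linarith [hrel])
        (by
          intro i _
          fin_cases i
          · exact he1
          · exact he2
          · exact he3)
      simp only [Fin.prod_univ_three, Matrix.cons_val_zero, Matrix.cons_val_one,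
        Matrix.head_cons, Matrix.cons_val_two, Matrix.tail_cons] at H
      exact le_trans (le_of_eq (lintegral_congr fun ω => hpt (A ω) (B s ω))) H
    have hK1 : (∫⁻ ω, A ω ^ p ∂Ω) = ∫⁻ t, (∑' r : ℤ, a t r ^ p) ∂μ := by
      rw [hΩdef, prodcount (hmA.pow_const p) μ]
    have hK2 : ∀ s : ℤ, (∫⁻ ω, B s ω ^ q ∂Ω) = ∫⁻ t, (∑' r : ℤ, b t r ^ q) ∂μ := by
      intro s
      rw [hΩdef, prodcount ((hmB s).pow_const q) μ]
      refine lintegral_congr fun t => ?_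
      exact (Equiv.addRight s).tsum_eq (fun r => b t r ^ q)
    have hTsum : ∑' s : ℤ, T s = ∫⁻ t, (∑' r : ℤ, a t r ^ p) * (∑' r : ℤ, b t r ^ q) ∂μ := by
      calc ∑' s : ℤ, T s = ∫⁻ ω, ∑' s : ℤ, A ω ^ p * B s ω ^ q ∂Ω :=
          (lintegral_tsum fun s => ((hmA.pow_const p).mul ((hmB s).pow_const q)).aemeasurable).symm
        _ = ∫⁻ ω, A ω ^ p * ∑' r : ℤ, b ω.1 r ^ q ∂Ω := by
            refine lintegral_congr fun ω => ?_
            rw [ENNReal.tsum_mul_left]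
            congr 1
            exact (Equiv.addLeft ω.2).tsum_eq (fun r => b ω.1 r ^ q)
        _ = ∫⁻ t, ∑' r : ℤ, (a t r ^ p * ∑' r' : ℤ, b t r' ^ q) ∂μ := by
            have hmix : Measurable fun ω : ℝ × ℤ => A ω ^ p * ∑' r : ℤ, b ω.1 r ^ q :=
              (hmA.pow_const p).mul ((hmGq q).comp measurable_fst)
            rw [hΩdef, prodcount hmix μ]
        _ = ∫⁻ t, (∑' r : ℤ, a t r ^ p) * (∑' r : ℤ, b t r ^ q) ∂μ := by
            refine lintegral_congr fun t => ?_
            rw [ENNReal.tsum_mul_right]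
    have hS : ∑' s : ℤ, T s < ∞ := by
      rw [hTsum]
      refine lt_of_le_of_lt (sq_int_bound μ _ _ (hmFp p).aemeasurable (hmGq q).aemeasurable) ?_
      exact ENNReal.mul_lt_top
        (ENNReal.rpow_lt_top_of_nonneg (by norm_num) (hFsq hα').ne)
        (ENNReal.rpow_lt_top_of_nonneg (by norm_num) (hGsq hβ').ne)
    have hK1fin : (∫⁻ ω, A ω ^ p ∂Ω) < ∞ := by rw [hK1]; exact hFint hα'
    have hK2fin : (∫⁻ t, (∑' r : ℤ, b t r ^ q) ∂μ) < ∞ := hGint hβ'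
    set Cst : ℝ≥0∞ := (∫⁻ ω, A ω ^ p ∂Ω)^((1/p - 1/rr)*rr) *
        (∫⁻ t, (∑' r : ℤ, b t r ^ q) ∂μ)^((1/q - 1/rr)*rr) with hCst
    have hCstfin : Cst < ∞ := ENNReal.mul_lt_top
      (ENNReal.rpow_lt_top_of_nonneg (mul_nonneg he2 hrr0.le) hK1fin.ne)
      (ENNReal.rpow_lt_top_of_nonneg (mul_nonneg he3 hrr0.le) hK2fin.ne)
    have hbound : ∀ s : ℤ, (c s) ^ rr ≤ T s * Cst := by
      intro s
      have h1 : c s ≤ (T s)^(1/rr) * ((∫⁻ ω, A ω ^ p ∂Ω)^(1/p - 1/rr) *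
          (∫⁻ t, (∑' r : ℤ, b t r ^ q) ∂μ)^(1/q - 1/rr)) := by
        rw [← mul_assoc, ← hK2 s]
        exact holder s
      calc (c s) ^ rr ≤ ((T s)^(1/rr) * ((∫⁻ ω, A ω ^ p ∂Ω)^(1/p - 1/rr) *
            (∫⁻ t, (∑' r : ℤ, b t r ^ q) ∂μ)^(1/q - 1/rr)))^rr :=
          ENNReal.rpow_le_rpow h1 hrr0.le
        _ = T s * Cst := by
          rw [ENNReal.mul_rpow_of_nonneg _ _ hrr0.le, ENNReal.mul_rpow_of_nonneg _ _ hrr0.le,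
            ← ENNReal.rpow_mul, ← ENNReal.rpow_mul, ← ENNReal.rpow_mul,
            show (1/rr) * rr = 1 by field_simp, ENNReal.rpow_one]
    have hfin : ∑' s : ℤ, (c s) ^ rr < ∞ := by
      calc ∑' s : ℤ, (c s) ^ rr ≤ ∑' s : ℤ, T s * Cst := ENNReal.tsum_le_tsum hbound
        _ = (∑' s : ℤ, T s) * Cst := ENNReal.tsum_mul_right
        _ < ∞ := ENNReal.mul_lt_top hS hCstfin
    show lnormZ γ c < ∞
    rw [lnormZ, if_neg hγ']
    exact ENNReal.rpow_lt_top_of_nonneg (by positivity) hfin.ne
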